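/- Let A be a finite set and T an object of T⁺(A). The elementary layerings of T are in natural bijection with the linear orderings of the set V(T) of vertices of T that are compatible with (i.e., extend) the partial order on V(T) determined by the tree structure, the root being smallest; in particular every elementary layering of T is a simplex of NP(A) of dimension |V(T)| − 2. -/

import Mathlib

open CategoryTheory Opposite

noncomputable section

/-- A map in `TopCat` is a homotopy equivalence. -/
def TopCat.IsHomotopyEquivMap {X Y : TopCat} (f : X ⟶ Y) : Prop :=
  ∃ g : Y ⟶ X, ContinuousMap.Homotopic (f ≫ g).hom (TopCat.Hom.hom (𝟙 X)) ∧ ContinuousMap.Homotopic (g ≫ f).hom (TopCat.Hom.hom (𝟙 Y))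

/-- A map of simplicial sets is a weak homotopy equivalence; since geometric realizations
are CW complexes, this is (by Whitehead's theorem) equivalent to the geometric
realization being a homotopy equivalence, which is how we phrase it. -/
def SSet.IsWeakHomotopyEquiv {X Y : SSet.{0}} (f : X ⟶ Y) : Prop :=
  TopCat.IsHomotopyEquivMap (SSet.toTop.map f)

/-- A simplicial set is weakly contractible iff its geometric realization (a CW complex)
is contractible. -/
def SSet.WeaklyContractible (X : SSet.{0}) : Prop :=
  ContractibleSpace (SSet.toTop.obj X)

/-- A functor is homotopy initial if for every object `c` of the target, the comma
category `φ/c` has weakly contractible nerve (classifying space). -/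
def CategoryTheory.Functor.HomotopyInitial {D : Type} [Category.{0} D] {C : Type}
    [Category.{0} C] (φ : D ⥤ C) : Prop :=
  ∀ c : C, SSet.WeaklyContractible (nerve (CostructuredArrow φ c))
/-- The poset of partitions of `A` (as setoids) strictly finer than the
indiscrete partition `⊤` and strictly coarser than the discrete partition `⊥`,
ordered by refinement (the coarser partition being the smaller one). -/
def PartitionPoset (A : Type) : Type := { r : Setoid A // r ≠ ⊥ ∧ r ≠ ⊤ }

instance (A : Type) : PartialOrder (PartitionPoset A) :=
  PartialOrder.lift (fun P => OrderDual.toDual P.1)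
    (fun _ _ h => Subtype.ext (OrderDual.toDual.injective h))

/-- The partition complex of `A`: the nerve of the poset of nontrivial partitions. -/
abbrev partitionComplex (A : Type) : SSet.{0} := nerve (PartitionPoset A)

/-- The blocks of a partition. -/
def PartitionPoset.blocks {A : Type} (P : PartitionPoset A) : Set (Set A) := P.1.classes

theorem PartitionPoset.le_iff {A : Type} {P Q : PartitionPoset A} :
    P ≤ Q ↔ Q.1 ≤ P.1 := Iff.rfl

/-- A finite rooted tree with set of leaves `A` and no unary vertices, encoded by its
set of edges, each edge being recorded as the set of leaves lying above it: this family
of sets contains `A` itself (the root edge) and all singletons (the leaf edges), and is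
laminar (any two members are nested or disjoint). Vertices correspond to the
non-singleton members, and automatically have at least two incoming edges. -/
structure TreeOn (A : Type) : Type where
  edges : Set (Set A)
  univ_mem : Set.univ ∈ edges
  singleton_mem : ∀ a : A, {a} ∈ edges
  nonempty_of_mem : ∀ e ∈ edges, e.Nonempty
  laminar : ∀ e ∈ edges, ∀ f ∈ edges, e ⊆ f ∨ f ⊆ e ∨ e ∩ f = ∅

namespace TreeOn

variable {A : Type}

@[ext] theorem ext {S T : TreeOn A} (h : S.edges = T.edges) : S = T := by
  cases S; cases T; congr

/-- `S ≤ T` iff `S` is obtained from `T` by contracting a set of inner edges. -/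
instance : PartialOrder (TreeOn A) where
  le S T := S.edges ⊆ T.edges
  le_refl S := subset_rfl
  le_trans S T U h h' := Set.Subset.trans h h'
  le_antisymm S T h h' := ext (Set.Subset.antisymm h h')

/-- An inner edge: an edge which is neither the root edge nor a leaf. -/
def IsInnerEdge (T : TreeOn A) (e : Set A) : Prop :=
  e ∈ T.edges ∧ e ≠ Set.univ ∧ ∀ a : A, e ≠ {a}

/-- The vertices of a tree: they correspond to the non-singleton edges (each such edge
has a vertex on top of it). -/
def vertices (T : TreeOn A) : Set (Set A) := { e ∈ T.edges | ∀ a : A, e ≠ {a} }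

/-- A leaf vertex: a vertex all of whose incoming edges are leaves, i.e. a non-singleton
edge all of whose proper subedges are singletons. -/
def IsLeafVertex (T : TreeOn A) (e : Set A) : Prop :=
  e ∈ T.vertices ∧ ∀ f ∈ T.edges, f ⊆ e → f ≠ e → ∃ a : A, f = {a}

/-- The corolla: the tree with no inner edges. -/
def corolla (A : Type) [Nonempty A] : TreeOn A where
  edges := {Set.univ} ∪ { s | ∃ a : A, s = {a} }
  univ_mem := Or.inl rfl
  singleton_mem a := Or.inr ⟨a, rfl⟩
  nonempty_of_mem e he := by
    rcases he with h | ⟨a, rfl⟩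
    · simp only [Set.mem_singleton_iff] at h; subst h; exact Set.univ_nonempty
    · exact ⟨a, rfl⟩
  laminar e he f hf := by
    rcases hf with h | ⟨a, rfl⟩
    · simp only [Set.mem_singleton_iff] at h; subst h; exact Or.inl (Set.subset_univ e)
    · by_cases ha : a ∈ e
      · exact Or.inr (Or.inl (by simpa using ha))
      · exact Or.inr (Or.inr (by ext x; simp; rintro hx rfl; exact ha hx))

end TreeOn

/-- The category `T⁺(A)` of trees with leaf set `A` having at least one inner edge;
it is a poset under the contraction order. -/
def TreePlus (A : Type) : Type := { T : TreeOn A // ∃ e, T.IsInnerEdge e }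

instance (A : Type) : PartialOrder (TreePlus A) := Subtype.partialOrder _
section ChainTree

variable {A : Type}

theorem Setoid.exists_of_ne_bot {r : Setoid A} (h : r ≠ ⊥) :
    ∃ x y : A, x ≠ y ∧ r x y := by
  by_contra hc
  push_neg at hc
  refine h (Setoid.ext fun a b => ?_)
  constructor
  · intro hr
    by_contra hne
    exact hc a b hne hr
  · rintro rfl
    exact r.refl' a

theorem Setoid.class_subset_or_disjoint {r s : Setoid A} (h : r ≤ s) {c d : Set A}
    (hc : c ∈ r.classes) (hd : d ∈ s.classes) : c ⊆ d ∨ c ∩ d = ∅ := by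
  obtain ⟨y, rfl⟩ := hc
  obtain ⟨z, rfl⟩ := hd
  by_cases hints : ({ x | r x y } ∩ { x | s x z } : Set A) = ∅
  · exact Or.inr hints
  · left
    obtain ⟨x, hxr, hxs⟩ := Set.nonempty_iff_ne_empty.2 hints
    intro w hw
    have hwx : r w x := r.trans' hw (r.symm' hxr)
    exact s.trans' (h hwx) hxs

/-- The underlying tree of a layered tree, i.e. of a chain of partitions: the functor
`φ` forgetting the layers and deleting unary vertices. Its edges are the root edge, the
leaf edges and the blocks of the partitions in the chain. -/
def chainTree {n : ℕ} (F : ComposableArrows (PartitionPoset A) n) : TreeOn A where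
  edges := {Set.univ} ∪ { s | ∃ a : A, s = {a} } ∪ ⋃ i, (F.obj i).blocks
  univ_mem := Or.inl (Or.inl rfl)
  singleton_mem a := Or.inl (Or.inr ⟨a, rfl⟩)
  nonempty_of_mem e he := by
    rcases he with (h | ⟨a, rfl⟩) | h
    · simp only [Set.mem_singleton_iff] at h
      subst h
      obtain ⟨x, y, -, -⟩ := Setoid.exists_of_ne_bot (F.obj 0).2.1
      exact ⟨x, trivial⟩
    · exact ⟨a, rfl⟩
    · simp only [Set.mem_iUnion] at h
      obtain ⟨i, hi⟩ := h
      obtain ⟨y, rfl⟩ := hi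
      exact ⟨y, (F.obj i).1.refl' y⟩
  laminar e he f hf := by
    have singcase : ∀ (g : Set A) (a : A), ({a} : Set A) ⊆ g ∨ g ⊆ {a} ∨ ({a} : Set A) ∩ g = ∅ := by
      intro g a
      by_cases hag : a ∈ g
      · exact Or.inl (by simpa using hag)
      · refine Or.inr (Or.inr ?_)
        ext x
        simp only [Set.mem_inter_iff, Set.mem_singleton_iff, Set.mem_empty_iff_false, iff_false,
          not_and]
        rintro rfl
        exact hag
    rcases he with (he | ⟨a, rfl⟩) | he
    · simp only [Set.mem_singleton_iff] at he
      subst he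
      exact Or.inr (Or.inl (Set.subset_univ f))
    · exact singcase f a
    · rcases hf with (hf | ⟨b, rfl⟩) | hf
      · simp only [Set.mem_singleton_iff] at hf
        subst hf
        exact Or.inl (Set.subset_univ e)
      · rcases singcase e b with h | h | h
        · exact Or.inr (Or.inl h)
        · exact Or.inl h
        · exact Or.inr (Or.inr (by rw [Set.inter_comm]; exact h))
      · simp only [Set.mem_iUnion] at he hf
        obtain ⟨i, hi⟩ := he
        obtain ⟨j, hj⟩ := hf
        rcases le_total i j with hij | hij
        · have hle : (F.obj j).1 ≤ (F.obj i).1 := leOfHom (F.map (homOfLE hij))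
          rcases Setoid.class_subset_or_disjoint hle hj hi with h | h
          · exact Or.inr (Or.inl h)
          · exact Or.inr (Or.inr (by rw [Set.inter_comm]; exact h))
        · have hle : (F.obj i).1 ≤ (F.obj j).1 := leOfHom (F.map (homOfLE hij))
          rcases Setoid.class_subset_or_disjoint hle hi hj with h | h
          · exact Or.inl h
          · exact Or.inr (Or.inr h)

/-- Any tree arising from a chain of nontrivial partitions has an inner edge. -/
theorem chainTree_exists_inner {n : ℕ} (F : ComposableArrows (PartitionPoset A) n) :
    ∃ e, (chainTree F).IsInnerEdge e := by
  obtain ⟨x, y, hxy, hr⟩ := Setoid.exists_of_ne_bot (F.obj 0).2.1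
  refine ⟨{ z | (F.obj 0).1 z y }, ?_, ?_, ?_⟩
  · exact Or.inr (Set.mem_iUnion.2 ⟨0, ⟨y, rfl⟩⟩)
  · intro h
    refine (F.obj 0).2.2 (Setoid.ext fun a b => ?_)
    have ha : (F.obj 0).1 a y := by rw [Set.eq_univ_iff_forall] at h; exact h a
    have hb : (F.obj 0).1 b y := by rw [Set.eq_univ_iff_forall] at h; exact h b
    simp only [Setoid.top_def]
    constructor
    · intro _; trivial
    · intro _; exact (F.obj 0).1.trans' ha ((F.obj 0).1.symm' hb)
  · intro a h
    have hx : x ∈ ({a} : Set A) := by rw [← h]; exact hr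
    have hy : y ∈ ({a} : Set A) := by rw [← h]; exact (F.obj 0).1.refl' y
    simp only [Set.mem_singleton_iff] at hx hy
    exact hxy (hx.trans hy.symm)

end ChainTree
/-- A simplicial subset (subcomplex) of a simplicial set: a family of sets of simplices
closed under the simplicial structure maps. -/
structure SSet.Subcomplex' (X : SSet.{0}) : Type 1 where
  carrier : ∀ n : SimplexCategoryᵒᵖ, Set (X.obj n)
  map_mem : ∀ {n m : SimplexCategoryᵒᵖ} (f : n ⟶ m) {x : X.obj n},
    x ∈ carrier n → X.map f x ∈ carrier m

/-- The simplicial set underlying a subcomplex. -/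
def SSet.Subcomplex'.toSSet {X : SSet.{0}} (S : X.Subcomplex') : SSet.{0} where
  obj n := { x : X.obj n // x ∈ S.carrier n }
  map f := TypeCat.ofHom (fun x => ⟨X.map f x.1, S.map_mem f x.2⟩)
  map_id n := by
    ext x
    simp
  map_comp f g := by
    ext x
    simp

/-- The blocks of the top (last) partition in a chain of partitions. -/
def topBlocks {A : Type} {n : ℕ} (F : ComposableArrows (PartitionPoset A) n) :
    Set (Set A) :=
  (F.obj (Fin.last n)).blocks

/-- A chain of partitions (i.e. a layered tree) is *elementary* if it has exactly one
non-unary vertex in each layer: passing from each partition in the chain to the next,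
exactly one block is subdivided, and the top partition has exactly one non-singleton
block (which is subdivided into leaves). -/
def IsElementary {A : Type} {n : ℕ} (F : ComposableArrows (PartitionPoset A) n) : Prop :=
  (∀ i : Fin n, ∃! b : Set A,
      b ∈ (F.obj i.castSucc).blocks ∧ b ∉ (F.obj i.succ).blocks) ∧
  (∃! b : Set A, b ∈ topBlocks F ∧ ∀ a : A, b ≠ {a})

/-- A simplex of the partition complex is a layering of the tree `T` if applying `φ`
(forgetting layers) to it yields exactly `T`. -/
def IsLayering {A : Type} {n : ℕ} (F : ComposableArrows (PartitionPoset A) n)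
    (T : TreeOn A) : Prop :=
  chainTree F = T

/-- The subcomplex `L(T)` of the partition complex generated by the elementary
layerings of the tree `T`. (For the corolla this is the empty subcomplex.) -/
def layeringSub (A : Type) (T : TreeOn A) : (partitionComplex A).Subcomplex' where
  carrier n := { σ | ∃ (m : SimplexCategory) (τ : (partitionComplex A).obj (op m))
      (g : n.unop ⟶ m), IsElementary τ ∧ IsLayering τ T ∧
      σ = (partitionComplex A).map g.op τ }
  map_mem {n m} f {x} hx := by
    obtain ⟨m', τ, g, he, hl, rfl⟩ := hx
    refine ⟨m', τ, f.unop ≫ g, he, hl, ?_⟩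
    rw [op_comp, (partitionComplex A).map_comp]
    rfl

/-- The subcomplex `Lᵛ(T)` of `L(T)` generated by the elementary layerings of `T`
having the leaf vertex `v` in the top layer. -/
def leafVertexSub (A : Type) (T : TreeOn A) (v : Set A) :
    (partitionComplex A).Subcomplex' where
  carrier n := { σ | ∃ (m : SimplexCategory) (τ : (partitionComplex A).obj (op m))
      (g : n.unop ⟶ m), IsElementary τ ∧ IsLayering τ T ∧ v ∈ topBlocks τ ∧
      σ = (partitionComplex A).map g.op τ }
  map_mem {n m} f {x} hx := by
    obtain ⟨m', τ, g, he, hl, hv, rfl⟩ := hx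
    refine ⟨m', τ, f.unop ≫ g, he, hl, hv, ?_⟩
    rw [op_comp, (partitionComplex A).map_comp]
    rfl

section ELAux

open TreeOn

variable {A : Type}

theorem el_subset_or_subset {T : TreeOn A} {e f : Set A} (he : e ∈ T.edges)
    (hf : f ∈ T.edges) {a : A} (hae : a ∈ e) (haf : a ∈ f) : e ⊆ f ∨ f ⊆ e := by
  rcases T.laminar e he f hf with h | h | h
  · exact Or.inl h
  · exact Or.inr h
  · exact absurd (show a ∈ (∅ : Set A) from h ▸ ⟨hae, haf⟩) (Set.notMem_empty a)

theorem el_mem_vertices {T : TreeOn A} {v : Set A} :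
    v ∈ T.vertices ↔ v ∈ T.edges ∧ ∀ a : A, v ≠ {a} := Iff.rfl

theorem el_exists_pair {T : TreeOn A} {v : Set A} (hv : v ∈ T.vertices) :
    ∃ x ∈ v, ∃ y ∈ v, x ≠ y := by
  obtain ⟨x, hx⟩ := T.nonempty_of_mem v hv.1
  by_contra h
  push_neg at h
  exact hv.2 x (Set.eq_singleton_iff_unique_mem.2 ⟨hx, fun y hy => h y hy x hx⟩)

theorem el_superset_mem_vertices {T : TreeOn A} {v f : Set A} (hv : v ∈ T.vertices)
    (hf : f ∈ T.edges) (hvf : v ⊆ f) : f ∈ T.vertices := by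
  refine ⟨hf, fun a hfa => ?_⟩
  obtain ⟨x, hx, y, hy, hxy⟩ := el_exists_pair hv
  have hx' : x = a := by simpa [hfa] using hvf hx
  have hy' : y = a := by simpa [hfa] using hvf hy
  exact hxy (hx'.trans hy'.symm)

theorem el_univ_mem_vertices {T : TreeOn A} (hT : ∃ e, T.IsInnerEdge e) :
    Set.univ ∈ T.vertices := by
  obtain ⟨e, he, hne, hsing⟩ := hT
  refine ⟨T.univ_mem, fun a h => ?_⟩
  obtain ⟨x, hx⟩ := T.nonempty_of_mem e he
  obtain ⟨y, hy⟩ := (Set.ne_univ_iff_exists_notMem e).1 hne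
  have hx' : x = a := by simpa [h] using Set.mem_univ x
  have hy' : y = a := by simpa [h] using Set.mem_univ y
  exact hy ((hy'.trans hx'.symm) ▸ hx)

theorem el_rel_of_mem_class {S : Setoid A} {c : Set A} {a b : A}
    (hc : c ∈ S.classes) (ha : a ∈ c) (hb : b ∈ c) : S a b := by
  obtain ⟨y, rfl⟩ := hc
  exact S.trans' ha (S.symm' hb)

theorem el_eq_top_of_univ_mem_classes {S : Setoid A} (h : Set.univ ∈ S.classes) :
    S = ⊤ :=
  Setoid.eq_top_iff.2 fun x y => el_rel_of_mem_class h trivial trivial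

variable [Fintype A]

theorem el_exists_greatest_edge (T : TreeOn A) (O : Set (Set A))
    (hO : ∀ b : A, {b} ∉ O) (a : A) :
    ∃ e, (e ∈ T.edges ∧ e ∉ O ∧ a ∈ e) ∧
      ∀ f, f ∈ T.edges → f ∉ O → a ∈ f → f ⊆ e := by
  have hne : Set.Nonempty {e | e ∈ T.edges ∧ e ∉ O ∧ a ∈ e} :=
    ⟨{a}, T.singleton_mem a, hO a, rfl⟩
  obtain ⟨e, he, hmax⟩ := Set.Finite.exists_maximalFor id _ (Set.toFinite _) hne
  refine ⟨e, he, fun f hf1 hf2 hf3 => ?_⟩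
  rcases el_subset_or_subset hf1 he.1 hf3 he.2.2 with h | h
  · exact h
  · exact hmax ⟨hf1, hf2, hf3⟩ h

/-- The setoid whose classes are the maximal edges of `T` not belonging to the set `O`
of "opened" vertices. -/
def elSetoid (T : TreeOn A) (O : Set (Set A)) : Setoid A where
  r a b := a = b ∨ ∃ e, e ∈ T.edges ∧ e ∉ O ∧ a ∈ e ∧ b ∈ e
  iseqv := by
    constructor
    · exact fun a => Or.inl rfl
    · rintro a b (rfl | ⟨e, h1, h2, h3, h4⟩)
      exacts [Or.inl rfl, Or.inr ⟨e, h1, h2, h4, h3⟩]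
    · rintro a b c (rfl | ⟨e, h1, h2, h3, h4⟩) h
      · exact h
      rcases h with rfl | ⟨f, g1, g2, g3, g4⟩
      · exact Or.inr ⟨e, h1, h2, h3, h4⟩
      · rcases el_subset_or_subset h1 g1 h4 g3 with hs | hs
        · exact Or.inr ⟨f, g1, g2, hs h3, g4⟩
        · exact Or.inr ⟨e, h1, h2, h3, hs g4⟩

theorem el_elSetoid_iff {T : TreeOn A} {O : Set (Set A)} {a b : A} :
    elSetoid T O a b ↔ a = b ∨ ∃ e, e ∈ T.edges ∧ e ∉ O ∧ a ∈ e ∧ b ∈ e := Iff.rfl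

theorem el_elSetoid_class {T : TreeOn A} {O : Set (Set A)} {a : A} {e : Set A}
    (he : e ∈ T.edges) (heO : e ∉ O) (hae : a ∈ e)
    (hmax : ∀ f, f ∈ T.edges → f ∉ O → a ∈ f → f ⊆ e) :
    {x | elSetoid T O x a} = e := by
  ext x
  simp only [Set.mem_setOf_eq]
  constructor
  · rintro (rfl | ⟨f, h1, h2, h3, h4⟩)
    · exact hae
    · exact hmax f h1 h2 h4 h3
  · intro hx
    exact Or.inr ⟨e, he, heO, hx, hae⟩

theorem el_mem_classes_iff {T : TreeOn A} {O : Set (Set A)}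
    (hO : ∀ b : A, {b} ∉ O) {c : Set A} :
    c ∈ (elSetoid T O).classes ↔
      c ∈ T.edges ∧ c ∉ O ∧ ∀ f, f ∈ T.edges → c ⊆ f → f ≠ c → f ∈ O := by
  constructor
  · intro hc
    obtain ⟨a, rfl⟩ := hc
    obtain ⟨g, ⟨hg, hgO, hag⟩, hgmax⟩ := el_exists_greatest_edge T O hO a
    rw [el_elSetoid_class hg hgO hag hgmax]
    refine ⟨hg, hgO, fun f hf hcf hne => ?_⟩
    by_contra hfO
    exact hne (Set.Subset.antisymm (hgmax f hf hfO (hcf hag)) hcf)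
  · rintro ⟨he, heO, hmax⟩
    obtain ⟨a, ha⟩ := T.nonempty_of_mem c he
    obtain ⟨g, ⟨hg, hgO, hag⟩, hgmax⟩ := el_exists_greatest_edge T O hO a
    have hcg : c ⊆ g := hgmax c he heO ha
    have hgc : g = c := by
      by_contra hne
      exact hgO (hmax g hg hcg hne)
    exact ⟨a, (el_elSetoid_class he heO ha fun f hf hfO haf =>
      (hgmax f hf hfO haf).trans (le_of_eq hgc)).symm⟩

/-- The set of opened vertices recovered from a partition. -/
def elRecover (T : TreeOn A) (S : Setoid A) : Set (Set A) :=
  {v | v ∈ T.vertices ∧ ∀ b ∈ S.classes, ¬v ⊆ b}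

theorem el_mem_elRecover {T : TreeOn A} {S : Setoid A} {v : Set A} :
    v ∈ elRecover T S ↔ v ∈ T.vertices ∧ ∀ b ∈ S.classes, ¬v ⊆ b := Iff.rfl

theorem el_elRecover_upclosed {T : TreeOn A} {S : Setoid A} {v f : Set A}
    (hv : v ∈ elRecover T S) (hf : f ∈ T.vertices) (hvf : v ⊆ f) :
    f ∈ elRecover T S :=
  ⟨hf, fun b hb hfb => hv.2 b hb (hvf.trans hfb)⟩

theorem el_elSetoid_elRecover {T : TreeOn A} {S : Setoid A}
    (h : ∀ c ∈ S.classes, c ∈ T.edges) : elSetoid T (elRecover T S) = S := by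
  apply Setoid.ext
  intro a b
  rw [el_elSetoid_iff]
  constructor
  · rintro (rfl | ⟨e, he, heO, hae, hbe⟩)
    · exact S.refl' a
    · by_cases hv : e ∈ T.vertices
      · have : ∃ c ∈ S.classes, e ⊆ c := by
          by_contra hc
          push_neg at hc
          exact heO ⟨hv, hc⟩
        obtain ⟨c, hc, hec⟩ := this
        exact el_rel_of_mem_class hc (hec hae) (hec hbe)
      · have : ∃ x, e = {x} := by
          by_contra hx
          push_neg at hx
          exact hv ⟨he, hx⟩
        obtain ⟨x, rfl⟩ := this
        have hax : a = x := hae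
        have hb : b = x := hbe
        exact (hax.trans hb.symm) ▸ S.refl' a
  · intro hab
    refine Or.inr ⟨{x | S x a}, h _ (S.mem_classes a), ?_, S.refl' a, S.symm' hab⟩
    exact fun hmem => hmem.2 _ (S.mem_classes a) subset_rfl

end ELAux

section ELEnum

open TreeOn

variable {A : Type} [Fintype A] {T : TreeOn A} {m : ℕ}

/-- The set of vertices opened at stage `i` of an enumeration of the vertices. -/
def elOw (w : Fin m ≃ ↥T.vertices) (i : ℕ) : Set (Set A) :=
  {s | ∃ j : Fin m, (j : ℕ) ≤ i ∧ ((w j : Set A)) = s}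

variable (w : Fin m ≃ ↥T.vertices)

theorem el_elOw_sub (i : ℕ) : elOw w i ⊆ T.vertices := by
  rintro s ⟨j, hj, rfl⟩
  exact (w j).2

theorem el_elOw_mono {i i' : ℕ} (h : i ≤ i') : elOw w i ⊆ elOw w i' := by
  rintro s ⟨j, hj, rfl⟩
  exact ⟨j, hj.trans h, rfl⟩

theorem el_singleton_not_mem_elOw (i : ℕ) (a : A) : {a} ∉ elOw w i := by
  rintro ⟨j, hj, hje⟩
  exact (w j).2.2 a hje

include w in
theorem el_m_pos (hT : ∃ e, T.IsInnerEdge e) : 0 < m := by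
  rcases Nat.eq_zero_or_pos m with h | h
  · subst h
    exact (w.symm ⟨Set.univ, el_univ_mem_vertices hT⟩).elim0
  · exact h

theorem el_w_zero (hT : ∃ e, T.IsInnerEdge e)
    (hw : ∀ i j : Fin m, ((w j : Set A)) ⊆ (w i : Set A) → i ≤ j) (hm : 0 < m) : ((w ⟨0, hm⟩ : Set A)) = Set.univ := by
  have h0 : w.symm ⟨Set.univ, el_univ_mem_vertices hT⟩ ≤ ⟨0, hm⟩ :=
    hw _ ⟨0, hm⟩ (by rw [Equiv.apply_symm_apply]; exact Set.subset_univ _)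
  have h1 : w.symm ⟨Set.univ, el_univ_mem_vertices hT⟩ = ⟨0, hm⟩ :=
    le_antisymm h0 (by simp [Fin.le_def])
  rw [← h1, Equiv.apply_symm_apply]

theorem el_univ_mem_elOw (hT : ∃ e, T.IsInnerEdge e)
    (hw : ∀ i j : Fin m, ((w j : Set A)) ⊆ (w i : Set A) → i ≤ j) (i : ℕ) :
    Set.univ ∈ elOw w i :=
  ⟨⟨0, el_m_pos w hT⟩, Nat.zero_le _, el_w_zero w hT hw _⟩

variable (hT : ∃ e, T.IsInnerEdge e)
variable (hw : ∀ i j : Fin m, ((w j : Set A)) ⊆ (w i : Set A) → i ≤ j)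

include hw in
theorem el_elOw_upclosed {i : ℕ} {v f : Set A} (hv : v ∈ elOw w i)
    (hf : f ∈ T.edges) (hvf : v ⊆ f) : f ∈ elOw w i := by
  obtain ⟨j, hj, rfl⟩ := hv
  have hfv : f ∈ T.vertices := el_superset_mem_vertices (w j).2 hf hvf
  refine ⟨w.symm ⟨f, hfv⟩, le_trans ?_ hj, by rw [Equiv.apply_symm_apply]⟩
  exact hw (w.symm ⟨f, hfv⟩) j (by rw [Equiv.apply_symm_apply]; exact hvf)

include hw in
theorem el_wk_mem_classes {i : ℕ} {k : Fin m} (hk : (k : ℕ) = i + 1) :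
    ((w k : Set A)) ∈ (elSetoid T (elOw w i)).classes := by
  rw [el_mem_classes_iff (el_singleton_not_mem_elOw w i)]
  refine ⟨(w k).2.1, ?_, ?_⟩
  · rintro ⟨j, hj, hje⟩
    have hjk : j = k := w.injective (Subtype.ext hje)
    subst hjk
    omega
  · intro f hf hsub hne
    have hfv : f ∈ T.vertices := el_superset_mem_vertices (w k).2 hf hsub
    have h1 : w.symm ⟨f, hfv⟩ ≤ k :=
      hw (w.symm ⟨f, hfv⟩) k (by rw [Equiv.apply_symm_apply]; exact hsub)
    have h2 : w.symm ⟨f, hfv⟩ ≠ k := by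
      intro h
      apply hne
      have := Equiv.apply_symm_apply w ⟨f, hfv⟩
      rw [h] at this
      exact congrArg Subtype.val this.symm
    have h3 : ((w.symm ⟨f, hfv⟩ : Fin m) : ℕ) < (k : ℕ) :=
      Fin.lt_def.1 (lt_of_le_of_ne h1 h2)
    exact ⟨w.symm ⟨f, hfv⟩, by omega, by rw [Equiv.apply_symm_apply]⟩

theorem el_wk_not_mem_classes {i : ℕ} {k : Fin m} (hk : (k : ℕ) ≤ i) :
    ((w k : Set A)) ∉ (elSetoid T (elOw w i)).classes := by
  rw [el_mem_classes_iff (el_singleton_not_mem_elOw w i)]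
  rintro ⟨-, hO, -⟩
  exact hO ⟨k, hk, rfl⟩

theorem el_eq_of_mem_not_mem {i : ℕ} {k : Fin m} (hk : (k : ℕ) = i + 1) {c : Set A}
    (hc : c ∈ (elSetoid T (elOw w i)).classes)
    (hc' : c ∉ (elSetoid T (elOw w (i + 1))).classes) : c = (w k : Set A) := by
  rw [el_mem_classes_iff (el_singleton_not_mem_elOw w i)] at hc
  obtain ⟨hce, hcO, hcmax⟩ := hc
  by_contra hne
  apply hc'
  rw [el_mem_classes_iff (el_singleton_not_mem_elOw w _)]
  refine ⟨hce, ?_, fun f hf hsub hnef =>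
    el_elOw_mono w (Nat.le_succ i) (hcmax f hf hsub hnef)⟩
  rintro ⟨j, hj, hje⟩
  rcases Nat.lt_or_ge (j : ℕ) (i + 1) with h | h
  · exact hcO ⟨j, by omega, hje⟩
  · have hjk : j = k := Fin.ext (by omega)
    exact hne (by rw [← hje, hjk])

theorem el_eq_of_nonsingleton {i : ℕ} (him : m = i + 2) {c : Set A}
    (hc : c ∈ (elSetoid T (elOw w i)).classes) (hcs : ∀ a : A, c ≠ {a}) :
    c = (w ⟨i + 1, by omega⟩ : Set A) := by
  rw [el_mem_classes_iff (el_singleton_not_mem_elOw w i)] at hc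
  obtain ⟨hce, hcO, -⟩ := hc
  have hcv : c ∈ T.vertices := ⟨hce, hcs⟩
  have h1 : ¬((w.symm ⟨c, hcv⟩ : Fin m) : ℕ) ≤ i :=
    fun h => hcO ⟨w.symm ⟨c, hcv⟩, h, by rw [Equiv.apply_symm_apply]⟩
  have h2 : ((w.symm ⟨c, hcv⟩ : Fin m) : ℕ) < m := (w.symm ⟨c, hcv⟩).isLt
  have h3 : w.symm ⟨c, hcv⟩ = ⟨i + 1, by omega⟩ :=
    Fin.ext (show ((w.symm ⟨c, hcv⟩ : Fin m) : ℕ) = i + 1 by omega)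
  rw [← h3, Equiv.apply_symm_apply]

include hT hw in
theorem el_elSetoid_ne_top (i : ℕ) : elSetoid T (elOw w i) ≠ ⊤ := by
  intro h
  obtain ⟨e0, he0⟩ := hT
  obtain ⟨a, ha0⟩ := T.nonempty_of_mem e0 he0.1
  have hsing_ne : ({a} : Set A) ≠ Set.univ := fun hs =>
    (el_univ_mem_vertices ⟨e0, he0⟩).2 a hs.symm
  have hne : Set.Nonempty {e | e ∈ T.edges ∧ a ∈ e ∧ e ≠ Set.univ} :=
    ⟨{a}, T.singleton_mem a, rfl, hsing_ne⟩
  obtain ⟨c, ⟨hc1, hc2, hc3⟩, hcmax⟩ :=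
    Set.Finite.exists_maximalFor id _ (Set.toFinite _) hne
  obtain ⟨bb, hb⟩ := (Set.ne_univ_iff_exists_notMem c).1 hc3
  have hab : elSetoid T (elOw w i) a bb := Setoid.eq_top_iff.1 h a bb
  rcases el_elSetoid_iff.1 hab with rfl | ⟨f, hf1, hf2, hf3, hf4⟩
  · exact hb hc2
  · have hfuniv : f ≠ Set.univ := fun h' => hf2 (h' ▸ el_univ_mem_elOw w ⟨e0, he0⟩ hw i)
    rcases el_subset_or_subset hf1 hc1 hf3 hc2 with hs | hs
    · exact hb (hs hf4)
    · have hcf : c = f := Set.Subset.antisymm hs (hcmax ⟨hf1, hf3, hfuniv⟩ hs)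
      exact hb (hcf ▸ hf4)

theorem el_elSetoid_ne_bot (i : ℕ) (hi : i + 1 < m) : elSetoid T (elOw w i) ≠ ⊥ := by
  intro h
  obtain ⟨x, hx, y, hy, hxy⟩ := el_exists_pair (w ⟨i + 1, hi⟩).2
  have hk : ((w ⟨i + 1, hi⟩ : Set A)) ∉ elOw w i := by
    rintro ⟨j, hj, hje⟩
    have hjk : j = ⟨i + 1, hi⟩ := w.injective (Subtype.ext hje)
    rw [hjk] at hj
    exact Nat.not_succ_le_self i hj
  have hr : elSetoid T (elOw w i) x y :=
    el_elSetoid_iff.2 (Or.inr ⟨(w ⟨i + 1, hi⟩ : Set A), (w ⟨i + 1, hi⟩).2.1, hk, hx, hy⟩)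
  rw [h] at hr
  rw [show ⇑(⊥ : Setoid A) = (· = ·) from Setoid.bot_def] at hr
  exact hxy hr

variable {n : ℕ}

/-- The chain of partitions associated to an admissible enumeration of the vertices. -/
def elChain (hmn : m = n + 2) : ComposableArrows (PartitionPoset A) n :=
  Monotone.functor
    (f := fun i : Fin (n + 1) =>
      (⟨elSetoid T (elOw w (i : ℕ)),
        el_elSetoid_ne_bot w (i : ℕ) (by have := i.isLt; omega),
        el_elSetoid_ne_top w hT hw (i : ℕ)⟩ : PartitionPoset A))
    (fun i j hij => by
      refine (PartitionPoset.le_iff (A := A)).2 ?_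
      refine Setoid.le_def.2 ?_
      intro x y hxy
      rcases el_elSetoid_iff.1 hxy with rfl | ⟨e, he, heO, hx, hy⟩
      · exact (elSetoid T _).refl' x
      · exact el_elSetoid_iff.2
          (Or.inr ⟨e, he, fun hc => heO (el_elOw_mono w hij hc), hx, hy⟩))

theorem elChain_obj (hmn : m = n + 2) (i : Fin (n + 1)) :
    ((elChain w hT hw hmn).obj i).1 = elSetoid T (elOw w (i : ℕ)) := rfl

theorem elChain_isLayering (hmn : m = n + 2) : IsLayering (elChain w hT hw hmn) T := by
  apply TreeOn.ext
  apply Set.Subset.antisymm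
  · rintro e ((he | he) | he)
    · rw [Set.mem_singleton_iff.1 he]
      exact T.univ_mem
    · obtain ⟨a, rfl⟩ := he
      exact T.singleton_mem a
    · obtain ⟨i, hi⟩ := Set.mem_iUnion.1 he
      exact ((el_mem_classes_iff (el_singleton_not_mem_elOw w _)).1 hi).1
  · intro e he
    by_cases h1 : e = Set.univ
    · exact Or.inl (Or.inl (by simp [h1]))
    by_cases h2 : ∀ x : A, e ≠ {x}
    · have hv : e ∈ T.vertices := ⟨he, h2⟩
      have hwk : ((w (w.symm ⟨e, hv⟩) : Set A)) = e := by rw [Equiv.apply_symm_apply]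
      have hk0 : ((w.symm ⟨e, hv⟩ : Fin m) : ℕ) ≠ 0 := by
        intro h0
        apply h1
        have h3 : w.symm ⟨e, hv⟩ = ⟨0, el_m_pos w hT⟩ := Fin.ext h0
        rw [← hwk, h3, el_w_zero w hT hw]
      have hkm : ((w.symm ⟨e, hv⟩ : Fin m) : ℕ) < m := (w.symm ⟨e, hv⟩).isLt
      refine Or.inr (Set.mem_iUnion.2
        ⟨⟨((w.symm ⟨e, hv⟩ : Fin m) : ℕ) - 1, by omega⟩, ?_⟩)
      have h4 := el_wk_mem_classes w hw
        (i := ((w.symm ⟨e, hv⟩ : Fin m) : ℕ) - 1) (k := w.symm ⟨e, hv⟩) (by omega)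
      rw [hwk] at h4
      exact h4
    · push_neg at h2
      obtain ⟨x, rfl⟩ := h2
      exact Or.inl (Or.inr ⟨x, rfl⟩)

theorem elChain_isElementary (hmn : m = n + 2) : IsElementary (elChain w hT hw hmn) := by
  constructor
  · intro i
    have hilt : (i : ℕ) + 1 < m := by have := i.isLt; omega
    refine ⟨(w ⟨(i : ℕ) + 1, hilt⟩ : Set A), ⟨?_, ?_⟩, ?_⟩
    · exact el_wk_mem_classes w hw rfl
    · exact el_wk_not_mem_classes w (Nat.le_refl _)
    · rintro c ⟨hc1, hc2⟩
      exact el_eq_of_mem_not_mem w rfl hc1 hc2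
  · have hlt : n + 1 < m := by omega
    refine ⟨(w ⟨n + 1, hlt⟩ : Set A), ⟨?_, ?_⟩, ?_⟩
    · exact el_wk_mem_classes w hw rfl
    · exact (w _).2.2
    · rintro c ⟨hc1, hc2⟩
      exact el_eq_of_nonsingleton w (i := n) hmn hc1 hc2

include hw in
theorem el_elRecover_elOw (i : ℕ) :
    elRecover T (elSetoid T (elOw w i)) = elOw w i := by
  apply Set.Subset.antisymm
  · rintro v ⟨hv, hno⟩
    by_contra hvO
    obtain ⟨a, ha⟩ := T.nonempty_of_mem v hv.1
    obtain ⟨g, ⟨hg, hgO, hag⟩, hgmax⟩ :=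
      el_exists_greatest_edge T (elOw w i) (el_singleton_not_mem_elOw w i) a
    have hvg : v ⊆ g := hgmax v hv.1 hvO ha
    exact hno g ⟨a, (el_elSetoid_class hg hgO hag hgmax).symm⟩ hvg
  · intro v hvO
    refine ⟨el_elOw_sub w i hvO, fun c hc hsub => ?_⟩
    rw [el_mem_classes_iff (el_singleton_not_mem_elOw w i)] at hc
    exact hc.2.1 (el_elOw_upclosed w hw hvO hc.1 hsub)

theorem el_w_eq_of_elOw_eq {w' : Fin m ≃ ↥T.vertices}
    (hmn : m = n + 2)
    (h : ∀ i : ℕ, i ≤ n → elOw w i = elOw w' i) : w = w' := by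
  have key : ∀ N : ℕ, ∀ k : Fin m, (k : ℕ) ≤ n → (k : ℕ) < N → w k = w' k := by
    intro N
    induction N with
    | zero => intro k _ hk; omega
    | succ N ih =>
      intro k hk hkN
      have h1 : ((w k : Set A)) ∈ elOw w' (k : ℕ) := by
        rw [← h _ hk]
        exact ⟨k, le_refl _, rfl⟩
      obtain ⟨j, hj, hje⟩ := h1
      have hjk : (j : ℕ) = (k : ℕ) := by
        by_contra hne
        have hlt : (j : ℕ) < (k : ℕ) := lt_of_le_of_ne hj hne
        have hjj : w j = w' j := ih j (by omega) (by omega)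
        have h2 : w' j = w k := Subtype.ext hje
        rw [← hjj] at h2
        exact hne (congrArg Fin.val (w.injective h2))
      have hjk' : j = k := Fin.ext hjk
      rw [hjk'] at hje
      exact (Subtype.ext hje).symm
  have hlast : ∀ k : Fin m, (k : ℕ) = n + 1 → w k = w' k := by
    intro k hk
    have hwl : w' (w'.symm (w k)) = w k := Equiv.apply_symm_apply _ _
    rcases Nat.lt_or_ge ((w'.symm (w k) : Fin m) : ℕ) (n + 1) with hlt | hge
    · exfalso
      have h1 : ((w' (w'.symm (w k)) : Set A)) ∈ elOw w' n := ⟨w'.symm (w k), by omega, rfl⟩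
      rw [← h n (le_refl n)] at h1
      obtain ⟨j, hj, hje⟩ := h1
      have h2 : w j = w k := Subtype.ext (hje.trans (congrArg Subtype.val hwl))
      have h3 : j = k := w.injective h2
      rw [h3] at hj
      omega
    · have h4 : w'.symm (w k) = k := Fin.ext (by have := (w'.symm (w k)).isLt; omega)
      rw [← hwl, h4]
  apply Equiv.ext
  intro k
  rcases Nat.lt_or_ge (k : ℕ) (n + 1) with hlt | hge
  · exact key (n + 1) k (by omega) hlt
  · exact hlast k (by have := k.isLt; omega)

/-- The linear order on the vertices induced by an enumeration. -/
def elOrder (w : Fin m ≃ ↥T.vertices) : ↥T.vertices → ↥T.vertices → Prop :=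
  fun v u => w.symm v ≤ w.symm u

theorem elOrder_isLinearOrder : IsLinearOrder ↥T.vertices (elOrder w) :=
  { refl := fun _ => le_refl _
    trans := fun _ _ _ => le_trans
    antisymm := fun _ _ h1 h2 => w.symm.injective (le_antisymm h1 h2)
    total := fun _ _ => le_total _ _ }

/-- A linear order packaged from `IsLinearOrder`. -/
noncomputable def elLinearOrder {α : Type} (r : α → α → Prop) (hr : IsLinearOrder α r) :
    LinearOrder α :=
  haveI := hr
  { le := r
    le_refl := fun a => refl_of r a
    le_trans := fun a b c hab hbc => _root_.trans_of r hab hbc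
    le_antisymm := fun a b hab hba => antisymm_of r hab hba
    le_total := fun a b => total_of r a b
    toDecidableLE := Classical.decRel r }

variable [Fintype ↥T.vertices]

/-- The preorder associated to a linear order relation on the vertices. -/
noncomputable def elPre (r : ↥T.vertices → ↥T.vertices → Prop)
    (hr : IsLinearOrder ↥T.vertices r) : Preorder ↥T.vertices :=
  @PartialOrder.toPreorder _ (@LinearOrder.toPartialOrder _ (elLinearOrder r hr))

/-- The enumeration of the vertices determined by a linear order. -/
noncomputable def elEnumOfOrder (r : ↥T.vertices → ↥T.vertices → Prop)
    (hr : IsLinearOrder ↥T.vertices r) (hc : Fintype.card ↥T.vertices = m) :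
    Fin m ≃ ↥T.vertices :=
  (@monoEquivOfFin ↥T.vertices _ (elLinearOrder r hr) m hc).toEquiv

theorem elEnumOfOrder_le_iff (r : ↥T.vertices → ↥T.vertices → Prop)
    (hr : IsLinearOrder ↥T.vertices r) (hc : Fintype.card ↥T.vertices = m)
    (i j : Fin m) :
    r (elEnumOfOrder r hr hc i) (elEnumOfOrder r hr hc j) ↔ i ≤ j :=
  @OrderIso.le_iff_le (Fin m) ↥T.vertices _ (elPre r hr).toLE
    (@monoEquivOfFin ↥T.vertices _ (elLinearOrder r hr) m hc) i j

theorem elEnumOfOrder_symm_le_iff (r : ↥T.vertices → ↥T.vertices → Prop)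
    (hr : IsLinearOrder ↥T.vertices r) (hc : Fintype.card ↥T.vertices = m)
    (v u : ↥T.vertices) :
    (elEnumOfOrder r hr hc).symm v ≤ (elEnumOfOrder r hr hc).symm u ↔ r v u :=
  @OrderIso.le_iff_le ↥T.vertices (Fin m) (elPre r hr).toLE _
    (@OrderIso.symm (Fin m) ↥T.vertices _ (elPre r hr).toLE
      (@monoEquivOfFin ↥T.vertices _ (elLinearOrder r hr) m hc)) v u

theorem elEnumOfOrder_elOrder (x : Fin m ≃ ↥T.vertices)
    (hc : Fintype.card ↥T.vertices = m) :
    elEnumOfOrder (elOrder x) (elOrder_isLinearOrder x) hc = x := by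
  haveI hwf : WellFoundedLT (Fin m) := inferInstance
  have hx : @monoEquivOfFin ↥T.vertices _
      (elLinearOrder (elOrder x) (elOrder_isLinearOrder x)) m hc =
      ⟨x, by
        intro a b
        show elOrder x (x a) (x b) ↔ a ≤ b
        unfold elOrder
        rw [Equiv.symm_apply_apply, Equiv.symm_apply_apply]⟩ :=
    @Subsingleton.elim _
      (@OrderIso.subsingleton_of_wellFoundedLT (Fin m) ↥T.vertices
        _ hwf
        (elPre (elOrder x) (elOrder_isLinearOrder x))) _ _
  show (@monoEquivOfFin ↥T.vertices _
      (elLinearOrder (elOrder x) (elOrder_isLinearOrder x)) m hc).toEquiv = x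
  rw [hx]

theorem el_elOw_finCongr {m' : ℕ} (hmm : m' = m) (i : ℕ) :
    elOw ((finCongr hmm).trans w) i = elOw w i := by
  ext s
  constructor
  · rintro ⟨j, hj, rfl⟩
    exact ⟨finCongr hmm j, by simpa using hj, rfl⟩
  · rintro ⟨j, hj, rfl⟩
    refine ⟨(finCongr hmm).symm j, by simpa using hj, by simp⟩

end ELEnum

section ELSurj

open TreeOn

variable {A : Type} [Fintype A] {T : TreeOn A}

theorem el_layering_exists_enum (hT : ∃ e, T.IsInnerEdge e) {n : ℕ}
    (F : ComposableArrows (PartitionPoset A) n)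
    (hE : IsElementary F) (hL : IsLayering F T) :
    ∃ w : Fin (n + 2) ≃ ↥T.vertices,
      (∀ i j : Fin (n + 2), ((w j : Set A)) ⊆ (w i : Set A) → i ≤ j) ∧
      ∀ i : Fin (n + 1), elSetoid T (elOw w (i : ℕ)) = (F.obj i).1 := by
  classical
  set S : Fin (n + 1) → Setoid A := fun i => (F.obj i).1 with hS
  have hble : ∀ (i : Fin (n + 1)) {c : Set A}, c ∈ (S i).classes → c ∈ T.edges := by
    intro i c hc
    have h1 : c ∈ (chainTree F).edges := Set.mem_union_right _ (Set.mem_iUnion.2 ⟨i, hc⟩)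
    rwa [hL] at h1
  have hle : ∀ {i j : Fin (n + 1)}, i ≤ j → S j ≤ S i := by
    intro i j hij
    exact PartitionPoset.le_iff.1 (leOfHom (F.map (homOfLE hij)))
  have hrel : ∀ {i j : Fin (n + 1)}, i ≤ j → ∀ {x y : A}, S j x y → S i x y := by
    intro i j hij x y hxy
    exact Setoid.le_def.1 (hle hij) hxy
  have hcls : ∀ (i : Fin (n + 1)) {c : Set A} {a : A}, c ∈ (S i).classes → a ∈ c →
      c = {x | S i x a} := by
    intro i c a hc ha
    exact Setoid.eq_of_mem_classes hc ha ((S i).mem_classes a) ((S i).refl' a)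
  have hsub : ∀ {i j : Fin (n + 1)}, i ≤ j → ∀ {c : Set A} {a : A}, c ∈ (S j).classes →
      a ∈ c → c ⊆ {x | S i x a} := by
    intro i j hij c a hc ha x hx
    exact hrel hij (el_rel_of_mem_class hc hx ha)
  set O : Fin (n + 1) → Set (Set A) := fun i => elRecover T (S i) with hO
  have hrec : ∀ i, elSetoid T (O i) = S i := fun i =>
    el_elSetoid_elRecover (fun c hc => hble i hc)
  have hOmono : ∀ {i j : Fin (n + 1)}, i ≤ j → O i ⊆ O j := by
    intro i j hij v hv
    refine ⟨hv.1, fun c hc hvc => ?_⟩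
    obtain ⟨a, ha⟩ := T.nonempty_of_mem v hv.1.1
    exact hv.2 {x | S i x a} ((S i).mem_classes a) (hvc.trans (hsub hij hc (hvc ha)))
  have hclassne : ∀ {i : Fin (n + 1)} {c : Set A}, c ∈ (S i).classes → c.Nonempty := by
    intro i c hc
    rcases Set.eq_empty_or_nonempty c with rfl | h
    · exact absurd hc Setoid.empty_notMem_classes
    · exact h
  have hnotuniv : ∀ i : Fin (n + 1), Set.univ ∉ (S i).classes := by
    intro i h
    exact (F.obj i).2.2 (el_eq_top_of_univ_mem_classes h)
  have hO0 : O 0 = {Set.univ} := by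
    apply Set.Subset.antisymm
    · rintro v ⟨hv1, hv2⟩
      by_contra hne
      have hne' : v ≠ Set.univ := hne
      have hv_edges : v ∈ (chainTree F).edges := by rw [hL]; exact hv1.1
      rcases hv_edges with (h | h) | h
      · exact hne' h
      · obtain ⟨x, rfl⟩ := h
        exact hv1.2 x rfl
      · obtain ⟨j, hj⟩ := Set.mem_iUnion.1 h
        obtain ⟨a, ha⟩ := hclassne hj
        exact hv2 {x | S 0 x a} ((S 0).mem_classes a) (hsub (Fin.zero_le j) hj ha)
    · intro v hv
      rw [Set.mem_singleton_iff] at hv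
      subst hv
      refine ⟨el_univ_mem_vertices hT, fun c hc hcu => ?_⟩
      have hcuniv : c = Set.univ := Set.eq_univ_of_univ_subset hcu
      exact hnotuniv 0 (hcuniv ▸ hc)
  -- the unique block subdivided at each step
  set b : Fin n → Set A := fun i => (hE.1 i).choose with hb
  have hbP : ∀ i : Fin n, b i ∈ (S i.castSucc).classes ∧ b i ∉ (S i.succ).classes :=
    fun i => (hE.1 i).choose_spec.1
  have hbU : ∀ (i : Fin n) (c : Set A),
      (c ∈ (S i.castSucc).classes ∧ c ∉ (S i.succ).classes) → c = b i :=
    fun i => (hE.1 i).choose_spec.2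
  have hbvert : ∀ i : Fin n, b i ∈ T.vertices := by
    intro i
    refine ⟨hble _ (hbP i).1, fun a hba => ?_⟩
    have hab : a ∈ b i := by rw [hba]; rfl
    have hbcls : b i = {x | S i.castSucc x a} := hcls _ (hbP i).1 hab
    have h1 : ({x | S i.succ x a} : Set A) ⊆ b i := by
      rw [hbcls]
      exact fun x hx => hrel (Fin.castSucc_lt_succ (i := i)).le hx
    have h2 : {x | S i.succ x a} = b i := by
      apply Set.Subset.antisymm h1
      rw [hba]
      exact Set.singleton_subset_iff.2 ((S i.succ).refl' a)
    exact (hbP i).2 (h2 ▸ (S i.succ).mem_classes a)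
  have hbO1 : ∀ i : Fin n, b i ∉ O i.castSucc := by
    intro i h
    exact h.2 _ (hbP i).1 subset_rfl
  have hbO2 : ∀ i : Fin n, b i ∈ O i.succ := by
    intro i
    refine ⟨hbvert i, fun c hc hbc => ?_⟩
    obtain ⟨a, ha⟩ := hclassne (hbP i).1
    have h1 : c ⊆ {x | S i.castSucc x a} := hsub (Fin.castSucc_lt_succ (i := i)).le hc (hbc ha)
    have h2 : c ⊆ b i := by
      rw [hcls _ (hbP i).1 ha]
      exact h1
    have h3 : c = b i := Set.Subset.antisymm h2 hbc
    exact (hbP i).2 (h3 ▸ hc)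
  have hOstep : ∀ i : Fin n, O i.succ = O i.castSucc ∪ {b i} := by
    intro i
    apply Set.Subset.antisymm
    · intro v hv
      by_cases hvic : v ∈ O i.castSucc
      · exact Or.inl hvic
      right
      have hvV : v ∈ T.vertices := hv.1
      have hex : ∃ c ∈ (S i.castSucc).classes, v ⊆ c := by
        by_contra hcon
        push_neg at hcon
        exact hvic ⟨hvV, hcon⟩
      obtain ⟨c, hc, hvc⟩ := hex
      have hcnotsucc : c ∉ (S i.succ).classes := fun h => hv.2 c h hvc
      have hcb : c = b i := hbU i c ⟨hc, hcnotsucc⟩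
      rw [hcb] at hvc
      by_cases hveq : v = b i
      · exact hveq
      exfalso
      have hv_edges : v ∈ (chainTree F).edges := by rw [hL]; exact hvV.1
      rcases hv_edges with (h | h) | h
      · have hbi : b i = Set.univ := Set.eq_univ_of_univ_subset (h ▸ hvc)
        exact hnotuniv _ (hbi ▸ (hbP i).1)
      · obtain ⟨x, rfl⟩ := h
        exact hvV.2 x rfl
      · obtain ⟨j, hj⟩ := Set.mem_iUnion.1 h
        obtain ⟨a, ha⟩ := T.nonempty_of_mem v hvV.1
        rcases le_or_gt j i.castSucc with hji | hij
        · have h1 : b i = {x | S i.castSucc x a} := hcls _ (hbP i).1 (hvc ha)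
          have h2 : v = {x | S j x a} := hcls _ hj ha
          have h3 : b i ⊆ v := by
            rw [h1, h2]
            exact fun x hx => hrel hji hx
          exact hveq (Set.Subset.antisymm hvc h3)
        · have hij' : i.succ ≤ j := Fin.castSucc_lt_iff_succ_le.1 hij
          exact hv.2 {x | S i.succ x a} ((S i.succ).mem_classes a) (hsub hij' hj ha)
    · intro v hv
      rcases hv with hv | hv
      · exact hOmono (Fin.castSucc_lt_succ (i := i)).le hv
      · rw [Set.mem_singleton_iff] at hv
        rw [hv]
        exact hbO2 i
  -- the top block
  set bs : Set A := hE.2.choose with hbs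
  have hsP : bs ∈ topBlocks F ∧ ∀ a : A, bs ≠ {a} := hE.2.choose_spec.1
  have hsU : ∀ c : Set A, (c ∈ topBlocks F ∧ ∀ a : A, c ≠ {a}) → c = bs :=
    hE.2.choose_spec.2
  have hsClass : bs ∈ (S (Fin.last n)).classes := hsP.1
  have hsvert : bs ∈ T.vertices := ⟨hble _ hsClass, hsP.2⟩
  have hOlast : O (Fin.last n) = T.vertices \ {bs} := by
    apply Set.Subset.antisymm
    · rintro v ⟨hv1, hv2⟩
      refine ⟨hv1, fun hveq => ?_⟩
      rw [Set.mem_singleton_iff] at hveq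
      exact hv2 bs hsClass hveq.subset
    · rintro v ⟨hvV, hvne⟩
      refine ⟨hvV, fun c hc hvc => ?_⟩
      have hcns : ∀ a : A, c ≠ {a} := by
        intro a hca
        obtain ⟨x, hx, y, hy, hxy⟩ := el_exists_pair hvV
        have h1 : x = a := by simpa [hca] using hvc hx
        have h2 : y = a := by simpa [hca] using hvc hy
        exact hxy (h1.trans h2.symm)
      have hcbs : c = bs := hsU c ⟨hc, hcns⟩
      rw [hcbs] at hvc
      have hvbs : v ≠ bs := fun h => hvne (Set.mem_singleton_iff.2 h)
      have hv_edges : v ∈ (chainTree F).edges := by rw [hL]; exact hvV.1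
      rcases hv_edges with (h | h) | h
      · have hbu : bs = Set.univ := Set.eq_univ_of_univ_subset (h ▸ hvc)
        exact hnotuniv _ (hbu ▸ hsClass)
      · obtain ⟨x, rfl⟩ := h
        exact hvV.2 x rfl
      · obtain ⟨j, hj⟩ := Set.mem_iUnion.1 h
        obtain ⟨a, ha⟩ := T.nonempty_of_mem v hvV.1
        have h1 : bs = {x | S (Fin.last n) x a} := hcls _ hsClass (hvc ha)
        have h2 : v = {x | S j x a} := hcls _ hj ha
        have h3 : bs ⊆ v := by
          rw [h1, h2]
          exact fun x hx => hrel (Fin.le_last j) hx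
        exact hvbs (Set.Subset.antisymm hvc h3)
  -- the enumeration of the vertices
  set u : Fin (n + 2) → Set A := fun k =>
    if h0 : (k : ℕ) = 0 then Set.univ
    else if hk : (k : ℕ) ≤ n then b ⟨(k : ℕ) - 1, by omega⟩ else bs with hu
  have hu0 : ∀ k : Fin (n + 2), (k : ℕ) = 0 → u k = Set.univ := by
    intro k hk
    simp only [hu]
    rw [dif_pos hk]
  have hub : ∀ (k : Fin (n + 2)) (i : Fin n), (k : ℕ) = (i : ℕ) + 1 → u k = b i := by
    intro k i hk
    have hi : (i : ℕ) < n := i.isLt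
    simp only [hu]
    rw [dif_neg (by omega), dif_pos (by omega)]
    have hfi : (⟨(k : ℕ) - 1, by omega⟩ : Fin n) = i := by
      apply Fin.ext
      show (k : ℕ) - 1 = (i : ℕ)
      omega
    rw [hfi]
  have hus : ∀ k : Fin (n + 2), (k : ℕ) = n + 1 → u k = bs := by
    intro k hk
    simp only [hu]
    rw [dif_neg (by omega), dif_neg (by omega)]
  have huvert : ∀ k, u k ∈ T.vertices := by
    intro k
    rcases Nat.eq_zero_or_pos (k : ℕ) with h0 | h0
    · rw [hu0 k h0]
      exact el_univ_mem_vertices hT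
    rcases Nat.lt_or_ge (k : ℕ) (n + 1) with h1 | h1
    · have hi : (k : ℕ) - 1 < n := by omega
      rw [hub k ⟨(k : ℕ) - 1, hi⟩ (show (k : ℕ) = (k : ℕ) - 1 + 1 by omega)]
      exact hbvert _
    · have h2 : (k : ℕ) = n + 1 := by have := k.isLt; omega
      rw [hus k h2]
      exact hsvert
  have hOu : ∀ i : Fin (n + 1), O i = u '' {k : Fin (n + 2) | (k : ℕ) ≤ (i : ℕ)} := by
    intro i
    induction i using Fin.induction with
    | zero =>
      rw [hO0]
      apply Set.Subset.antisymm
      · intro s hs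
        rw [Set.mem_singleton_iff] at hs
        exact ⟨⟨0, by omega⟩, by simp, by rw [hu0 _ rfl, hs]⟩
      · rintro s ⟨k, hk, rfl⟩
        have hk0 : (k : ℕ) = 0 := by simpa using hk
        rw [hu0 k hk0]
        rfl
    | succ i ih =>
      rw [hOstep i, ih]
      apply Set.Subset.antisymm
      · rintro s (⟨k, hk, rfl⟩ | hs)
        · refine ⟨k, ?_, rfl⟩
          simp only [Set.mem_setOf_eq, Fin.coe_castSucc, Fin.val_succ] at hk ⊢
          omega
        · rw [Set.mem_singleton_iff] at hs
          refine ⟨⟨(i : ℕ) + 1, by omega⟩, by simp, ?_⟩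
          rw [hub _ i (show ((i : ℕ) + 1) = (i : ℕ) + 1 from rfl), hs]
      · rintro s ⟨k, hk, rfl⟩
        simp only [Set.mem_setOf_eq, Fin.val_succ] at hk
        rcases Nat.lt_or_ge (k : ℕ) ((i : ℕ) + 1) with h | h
        · refine Or.inl ⟨k, ?_, rfl⟩
          simp only [Set.mem_setOf_eq, Fin.coe_castSucc]
          omega
        · have hk1 : (k : ℕ) = (i : ℕ) + 1 := by omega
          right
          rw [hub k i hk1]
          rfl
  have huinj' : ∀ k l : Fin (n + 2), (k : ℕ) < (l : ℕ) → u k ≠ u l := by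
    intro k l hkl heq
    rcases Nat.lt_or_ge (l : ℕ) (n + 1) with h1 | h1
    · have hi : (l : ℕ) - 1 < n := by omega
      have hul : u l = b ⟨(l : ℕ) - 1, hi⟩ :=
        hub l ⟨(l : ℕ) - 1, hi⟩ (show (l : ℕ) = (l : ℕ) - 1 + 1 by omega)
      have hmemO : u k ∈ O (Fin.castSucc ⟨(l : ℕ) - 1, hi⟩) := by
        rw [hOu]
        exact ⟨k, show (k : ℕ) ≤ (l : ℕ) - 1 by omega, rfl⟩
      exact hbO1 ⟨(l : ℕ) - 1, hi⟩ (by rw [← hul, ← heq]; exact hmemO)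
    · have hl1 : (l : ℕ) = n + 1 := by have := l.isLt; omega
      have hul : u l = bs := hus l hl1
      have hmemO : u k ∈ O (Fin.last n) := by
        rw [hOu]
        exact ⟨k, show (k : ℕ) ≤ n by omega, rfl⟩
      rw [hOlast] at hmemO
      exact hmemO.2 (Set.mem_singleton_iff.2 (heq.trans hul))
  have huinj : Function.Injective fun k => (⟨u k, huvert k⟩ : ↥T.vertices) := by
    intro k l h
    have h' : u k = u l := congrArg Subtype.val h
    rcases lt_trichotomy (k : ℕ) (l : ℕ) with hlt | heq | hgt
    · exact absurd h' (huinj' k l hlt)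
    · exact Fin.ext heq
    · exact absurd h'.symm (huinj' l k hgt)
  have husurj : Function.Surjective fun k => (⟨u k, huvert k⟩ : ↥T.vertices) := by
    intro v
    by_cases hvb : v.1 = bs
    · refine ⟨⟨n + 1, by omega⟩, Subtype.ext ?_⟩
      show u ⟨n + 1, by omega⟩ = v.1
      rw [hus ⟨n + 1, by omega⟩ rfl]
      exact hvb.symm
    · have hmem : v.1 ∈ O (Fin.last n) := by
        rw [hOlast]
        exact ⟨v.2, fun h => hvb (Set.mem_singleton_iff.1 h)⟩
      rw [hOu] at hmem
      obtain ⟨k, _, hk⟩ := hmem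
      exact ⟨k, Subtype.ext hk⟩
  refine ⟨Equiv.ofBijective _ ⟨huinj, husurj⟩, ?_, ?_⟩
  · intro i j hsubij
    by_contra hij
    push_neg at hij
    have hij' : (j : ℕ) < (i : ℕ) := hij
    have hsubij' : u j ⊆ u i := hsubij
    rcases Nat.lt_or_ge (i : ℕ) (n + 1) with h1 | h1
    · have h0 : (i : ℕ) ≠ 0 := by omega
      have hi : (i : ℕ) - 1 < n := by omega
      have hui : u i = b ⟨(i : ℕ) - 1, hi⟩ :=
        hub i ⟨(i : ℕ) - 1, hi⟩ (show (i : ℕ) = (i : ℕ) - 1 + 1 by omega)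
      have hmemO : u j ∈ O (Fin.castSucc ⟨(i : ℕ) - 1, hi⟩) := by
        rw [hOu]
        exact ⟨j, show (j : ℕ) ≤ (i : ℕ) - 1 by omega, rfl⟩
      have hmemO2 : u i ∈ O (Fin.castSucc ⟨(i : ℕ) - 1, hi⟩) :=
        el_elRecover_upclosed hmemO (huvert i) hsubij'
      exact hbO1 ⟨(i : ℕ) - 1, hi⟩ (by rw [← hui]; exact hmemO2)
    · have hi1 : (i : ℕ) = n + 1 := by have := i.isLt; omega
      have hui : u i = bs := hus i hi1
      have hmemO : u j ∈ O (Fin.last n) := by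
        rw [hOu]
        exact ⟨j, show (j : ℕ) ≤ n by omega, rfl⟩
      have hmemO2 : u i ∈ O (Fin.last n) :=
        el_elRecover_upclosed hmemO (huvert i) hsubij'
      rw [hOlast] at hmemO2
      exact hmemO2.2 (Set.mem_singleton_iff.2 hui)
  · intro i
    have hOw : elOw (Equiv.ofBijective _ ⟨huinj, husurj⟩) (i : ℕ) = O i := by
      rw [hOu i]
      ext s
      constructor
      · rintro ⟨j, hj, rfl⟩
        exact ⟨j, hj, rfl⟩
      · rintro ⟨j, hj, rfl⟩
        exact ⟨j, hj, rfl⟩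
    rw [hOw, hrec i]

end ELSurj

/-- The elementary layerings of a tree `T` in `T⁺(A)` are in bijection with the linear
orderings of the set `V(T)` of vertices of `T` compatible with (i.e. extending) the
partial order on `V(T)` determined by the tree structure (`v ≤ w` iff `w` lies above
`v`, the root being smallest); in particular every elementary layering of `T` is a
simplex of `NP(A)` of dimension `|V(T)| - 2`. -/
theorem elementary_layerings_equiv_linear_orders (A : Type) [Fintype A] (T : TreePlus A) :
    Nonempty
      ({ x : Σ n : ℕ, ComposableArrows (PartitionPoset A) n //
          IsElementary x.2 ∧ IsLayering x.2 T.1 } ≃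
        { r : ↥T.1.vertices → ↥T.1.vertices → Prop //
            IsLinearOrder ↥T.1.vertices r ∧
            ∀ v w : ↥T.1.vertices, w.1 ⊆ v.1 → r v w }) ∧
    ∀ (n : ℕ) (F : ComposableArrows (PartitionPoset A) n),
      IsElementary F → IsLayering F T.1 → n = Nat.card ↥T.1.vertices - 2 := by
  classical
  obtain ⟨e₀, he₀⟩ := T.2
  have hT : ∃ e, T.1.IsInnerEdge e := ⟨e₀, he₀⟩
  haveI : Fintype ↥T.1.vertices := Fintype.ofFinite _
  set m := Nat.card ↥T.1.vertices with hm
  have hm2 : 2 ≤ m := by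
    haveI : Nontrivial ↥T.1.vertices :=
      ⟨⟨Set.univ, el_univ_mem_vertices hT⟩, ⟨e₀, he₀.1, he₀.2.2⟩, fun h =>
        he₀.2.1 (congrArg Subtype.val h).symm⟩
    have h1 := Finite.one_lt_card_iff_nontrivial.2 this
    omega
  set n := m - 2 with hn
  have hmn : m = n + 2 := by omega
  constructor
  · let En := {w : Fin m ≃ ↥T.1.vertices //
      ∀ i j : Fin m, ((w j : Set A)) ⊆ (w i : Set A) → i ≤ j}
    let Φ : En → {x : Σ n : ℕ, ComposableArrows (PartitionPoset A) n //
        IsElementary x.2 ∧ IsLayering x.2 T.1} :=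
      fun x => ⟨⟨n, elChain x.1 hT x.2 hmn⟩,
        elChain_isElementary x.1 hT x.2 hmn, elChain_isLayering x.1 hT x.2 hmn⟩
    have hinj : Function.Injective Φ := by
      intro x y hxy
      have h0 := congrArg Subtype.val hxy
      have hC := eq_of_heq ((Sigma.ext_iff.1 h0).2)
      have h1 : ∀ i : Fin (n + 1),
          elSetoid T.1 (elOw x.1 (i : ℕ)) = elSetoid T.1 (elOw y.1 (i : ℕ)) := by
        intro i
        exact congrArg
          (fun (G : ComposableArrows (PartitionPoset A) n) => (G.obj i).1) hC
      have h3 : ∀ i : ℕ, i ≤ n → elOw x.1 i = elOw y.1 i := by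
        intro i hi
        have h4 := h1 ⟨i, by omega⟩
        calc elOw x.1 i = elRecover T.1 (elSetoid T.1 (elOw x.1 i)) :=
              (el_elRecover_elOw x.1 x.2 i).symm
          _ = elRecover T.1 (elSetoid T.1 (elOw y.1 i)) := by
              exact congrArg (elRecover T.1) h4
          _ = elOw y.1 i := el_elRecover_elOw y.1 y.2 i
      exact Subtype.ext (el_w_eq_of_elOw_eq x.1 hmn h3)
    have hsurj : Function.Surjective Φ := by
      rintro ⟨⟨n', F⟩, hE, hL⟩
      obtain ⟨w0, hw0, hOw0⟩ := el_layering_exists_enum hT F hE hL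
      have hcard : m = n' + 2 := by
        rw [hm, Nat.card_congr w0.symm]
        simp
      have hnn' : n = n' := by omega
      subst hnn'
      set w1 : Fin m ≃ ↥T.1.vertices := (finCongr hcard).trans w0 with hw1def
      have hw1 : ∀ i j : Fin m, ((w1 j : Set A)) ⊆ (w1 i : Set A) → i ≤ j := by
        intro i j hsub
        have h5 := hw0 (finCongr hcard i) (finCongr hcard j) hsub
        have h6 : ((finCongr hcard i : Fin (n + 2)) : ℕ) ≤
            ((finCongr hcard j : Fin (n + 2)) : ℕ) := h5
        simp only [finCongr_apply, Fin.coe_cast] at h6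
        exact h6
      refine ⟨⟨w1, hw1⟩, ?_⟩
      apply Subtype.ext
      show (⟨n, elChain w1 hT hw1 hmn⟩ :
        Σ n' : ℕ, ComposableArrows (PartitionPoset A) n') = ⟨n, F⟩
      refine Sigma.ext_iff.2 ⟨rfl, heq_of_eq ?_⟩
      refine CategoryTheory.Functor.ext (fun i => ?_)
        (fun X Y ff => Subsingleton.elim _ _)
      apply Subtype.ext
      show elSetoid T.1 (elOw w1 (i : ℕ)) = (F.obj i).1
      rw [show elOw w1 (i : ℕ) = elOw w0 (i : ℕ) from el_elOw_finCongr w0 hcard (i : ℕ)]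
      exact hOw0 i
    have hcardV : Fintype.card ↥T.1.vertices = m := by
      rw [hm, Nat.card_eq_fintype_card]
    let f : En → {r : ↥T.1.vertices → ↥T.1.vertices → Prop //
        IsLinearOrder ↥T.1.vertices r ∧
        ∀ v w : ↥T.1.vertices, w.1 ⊆ v.1 → r v w} :=
      fun x => ⟨elOrder x.1, elOrder_isLinearOrder x.1,
        fun v u h => x.2 (x.1.symm v) (x.1.symm u) (by simpa using h)⟩
    let g : {r : ↥T.1.vertices → ↥T.1.vertices → Prop //
        IsLinearOrder ↥T.1.vertices r ∧
        ∀ v w : ↥T.1.vertices, w.1 ⊆ v.1 → r v w} → En :=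
      fun r =>
        ⟨elEnumOfOrder r.1 r.2.1 hcardV,
          fun i j hsub => (elEnumOfOrder_le_iff r.1 r.2.1 hcardV i j).1
            (r.2.2 _ _ hsub)⟩
    have hgf : ∀ x : En, g (f x) = x := by
      intro x
      apply Subtype.ext
      exact elEnumOfOrder_elOrder x.1 hcardV
    have hfg : ∀ r, f (g r) = r := by
      intro r
      apply Subtype.ext
      funext v u
      show elOrder (g r).1 v u = r.1 v u
      apply propext
      exact elEnumOfOrder_symm_le_iff r.1 r.2.1 hcardV v u
    exact ⟨(Equiv.ofBijective Φ ⟨hinj, hsurj⟩).symm.trans ⟨f, g, hgf, hfg⟩⟩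
  · intro n' F hE hL
    obtain ⟨w0, -, -⟩ := el_layering_exists_enum hT F hE hL
    have hc : m = n' + 2 := by
      rw [hm, Nat.card_congr w0.symm]
      simp
    omega

end
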